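/- Let 𝐏 ⊂ ℤ^r be a finite set whose convex hull has dimension r. Then there exist finitely many pairs (ξ_1, m_1), …, (ξ_s, m_s), where each ξ_i: ℤ^r → ℤ is a nonzero linear functional and m_i ∈ ℤ, such that every X ∈ ℤ^r not lying in the union of the slabs {x : m_i ≤ ξ_i(x) ≤ m_i + 1} satisfies: the lattice width of 𝐏 ∪ {X} is at least 2. In particular, for all X ∈ ℤ^r outside a finite union of such slabs, the set 𝐏 ∪ {X} is not a non-trivial Cayley sum (has lattice width greater than 1). -/

import Mathlib

open scoped Pointwise

noncomputable section

/-- A point of `ℝⁿ` is a lattice point if all its coordinates are integers. -/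
def IsLatticePoint {n : ℕ} (x : Fin n → ℝ) : Prop := ∀ i, ∃ z : ℤ, x i = (z : ℝ)

/-- A lattice polytope: the convex hull of finitely many lattice points. -/
def IsLatticePolytope {n : ℕ} (P : Set (Fin n → ℝ)) : Prop :=
  ∃ V : Finset (Fin n → ℝ), (∀ v ∈ V, IsLatticePoint v) ∧
    P = convexHull ℝ (V : Set (Fin n → ℝ))

/-- The dimension of a subset of `ℝⁿ`: the rank of the direction of its affine span. -/
def polyDim {n : ℕ} (S : Set (Fin n → ℝ)) : ℕ :=
  Module.finrank ℝ (affineSpan ℝ S).direction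

/-- A face of a convex set: an extreme convex subset (this includes `∅` and the set itself). -/
def IsFace {n : ℕ} (K F : Set (Fin n → ℝ)) : Prop :=
  IsExtreme ℝ K F ∧ Convex ℝ F

/-- The `d`-dimensional lattice volume (normalized so that a fundamental domain of the
lattice of the affine span has volume `1`, and multiplied by `d!`), computed via the
Ehrhart-type limit `d! · #(m·S ∩ ℤⁿ)/m^d`.  It is `0` if `dim S < d`. -/
def latticeVol {n : ℕ} (d : ℕ) (S : Set (Fin n → ℝ)) : ℝ :=
  Filter.limUnder Filter.atTop fun m : ℕ =>
    ((d.factorial : ℝ) * ({x ∈ (m : ℝ) • S | IsLatticePoint x}.ncard : ℝ)) / (m : ℝ) ^ d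

/-- A polytope `P` contained in a cone `C` is convenient if `dim (P ∩ F) = dim F` for
every nonempty face `F` of `C`. -/
def IsConvenient {n : ℕ} (C P : Set (Fin n → ℝ)) : Prop :=
  P ⊆ C ∧ ∀ F : Set (Fin n → ℝ), IsFace C F → F.Nonempty → polyDim (P ∩ F) = polyDim F

/-- The Newton number `ν_C(P) = Σ_F (−1)^{n−dim F} Vol_ℤ(P ∩ F)`, the sum running over
all nonempty faces `F` of the `n`-dimensional cone `C`.  (Note `(−1)^{n−dim F} = (−1)^{n+dim F}`.) -/
def newtonNumber {n : ℕ} (C P : Set (Fin n → ℝ)) : ℝ :=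
  ∑ᶠ (F : Set (Fin n → ℝ)) (_ : IsFace C F ∧ F.Nonempty),
    (-1 : ℝ) ^ (n + polyDim F) * latticeVol (polyDim F) (P ∩ F)

/-- The cone `ℝ^m_{≥0} ⊕ ℝ^{n−m} ⊂ ℝⁿ`. -/
def orthant (n m : ℕ) : Set (Fin n → ℝ) := {x | ∀ i : Fin n, (i : ℕ) < m → 0 ≤ x i}



noncomputable def Phi {r : ℕ} (φ : (Fin r → ℤ) →ₗ[ℤ] ℤ) : (Fin r → ℝ) →ₗ[ℝ] ℝ :=
  ∑ i, ((φ (Pi.single i 1) : ℝ) • (LinearMap.proj i))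

lemma Phi_compat {r : ℕ} (φ : (Fin r → ℤ) →ₗ[ℤ] ℤ) (v : Fin r → ℤ) :
    Phi φ (fun i => (v i : ℝ)) = (φ v : ℝ) := by
  have hv : φ v = ∑ i, v i * φ (Pi.single i 1) := by
    conv_lhs => rw [← Finset.univ_sum_single v]
    rw [map_sum]
    refine Finset.sum_congr rfl fun i _ => ?_
    have : Pi.single i (v i) = (v i) • (Pi.single i 1 : Fin r → ℤ) := by
      funext j
      rcases eq_or_ne j i with rfl | hj
      · simp
      · simp [Pi.single_apply, hj]
    rw [this, map_smul, smul_eq_mul]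
  rw [hv]
  simp only [Phi, LinearMap.sum_apply, LinearMap.smul_apply, LinearMap.proj_apply,
    smul_eq_mul]
  push_cast
  exact Finset.sum_congr rfl fun i _ => by ring

lemma Phi_inj {r : ℕ} : Function.Injective (Phi (r := r)) := by
  intro φ ψ h
  refine LinearMap.ext fun w => ?_
  have := congrArg (fun f : (Fin r → ℝ) →ₗ[ℝ] ℝ => f (fun i => (w i : ℝ))) h
  simp only [Phi_compat] at this
  exact_mod_cast this

lemma bad_finite {r : ℕ} (A : Finset (Fin r → ℤ))
    (hdim : Module.finrank ℝ (affineSpan ℝ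
      ((fun (v : Fin r → ℤ) => fun i => (v i : ℝ)) '' (A : Set (Fin r → ℤ)))).direction = r) :
    {φ : (Fin r → ℤ) →ₗ[ℤ] ℤ | ∀ a ∈ A, ∀ b ∈ A, φ b ≤ φ a + 1}.Finite := by
  set E : (Fin r → ℤ) → (Fin r → ℝ) := fun v => fun i => (v i : ℝ) with hE
  set s : Set (Fin r → ℝ) := E '' (A : Set (Fin r → ℤ)) with hs
  have hfr : Module.finrank ℝ (Fin r → ℝ) = r := by simp
  have hspan : Submodule.span ℝ (s -ᵥ s) = ⊤ := by
    refine Submodule.eq_top_of_finrank_eq ?_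
    rw [← vectorSpan_def, ← direction_affineSpan, hfr]
    exact hdim
  obtain ⟨b, hbsub, hbspan, hbli⟩ := exists_linearIndependent ℝ (s -ᵥ s)
  have hbfin : b.Finite := hbli.setFinite
  haveI : Finite ↥b := hbfin.to_subtype
  let B : Module.Basis ↥b ℝ (Fin r → ℝ) := Module.Basis.mk hbli
    (by rw [Subtype.range_coe, hbspan, hspan])
  have hB : ∀ x : ↥b, B x = (x : Fin r → ℝ) := fun x => Module.Basis.mk_apply _ _ _
  set g : ((Fin r → ℤ) →ₗ[ℤ] ℤ) → (↥b → ℝ) := fun φ => fun x => Phi φ (x : Fin r → ℝ)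
  have hginj : Function.Injective g := by
    intro φ ψ h
    refine Phi_inj ?_
    refine Module.Basis.ext B fun x => ?_
    rw [hB]
    exact congrFun h x
  refine Set.Finite.of_finite_image ?_ (hginj.injOn)
  refine Set.Finite.subset (Set.Finite.pi (t := fun _ : ↥b => ({-1, 0, 1} : Set ℝ))
    (fun _ => by
      exact (Set.finite_singleton _).insert _ |>.insert _)) ?_
  rintro - ⟨φ, hφ, rfl⟩
  intro x _
  have hx : (x : Fin r → ℝ) ∈ s -ᵥ s := hbsub x.2
  obtain ⟨p, hp, q, hq, hpq⟩ := hx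
  obtain ⟨va, hva, rfl⟩ := hp
  obtain ⟨vb, hvb, rfl⟩ := hq
  have hval : g φ x = ((φ va - φ vb : ℤ) : ℝ) := by
    show Phi φ (x : Fin r → ℝ) = _
    rw [← hpq]
    show Phi φ (E va -ᵥ E vb) = _
    have h3 : E va -ᵥ E vb = fun i => ((va - vb) i : ℝ) := by
      funext i; simp [hE, vsub_eq_sub]
    rw [h3, Phi_compat, map_sub]
  have h1 : φ va - φ vb ≤ 1 := by
    have := hφ vb hvb va hva
    omega
  have h2 : -1 ≤ φ va - φ vb := by
    have := hφ va hva vb hvb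
    omega
  rw [hval]
  set z := φ va - φ vb
  interval_cases z <;> simp

/-- let `𝐏 ⊂ ℤ^r` be a finite set whose convex hull has dimension `r`.
Then there are finitely many slabs `{x | c_i ≤ ξ_i(x) ≤ c_i + 1}` (each `ξ_i` a nonzero
linear functional) such that every lattice point `X` outside their union satisfies: the
lattice width of `𝐏 ∪ {X}` is at least `2`, i.e. for every nonzero linear functional `φ`
there are `a, b ∈ 𝐏 ∪ {X}` with `φ(b) − φ(a) ≥ 2`. -/
theorem width_ge_two_outside_slabs {r : ℕ} (A : Finset (Fin r → ℤ))
    (hdim : polyDim ((fun (v : Fin r → ℤ) => fun i => (v i : ℝ)) '' (A : Set (Fin r → ℤ))) = r) :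
    ∃ (s : ℕ) (ξ : Fin s → ((Fin r → ℤ) →ₗ[ℤ] ℤ)) (c : Fin s → ℤ),
      (∀ i, ξ i ≠ 0) ∧
      ∀ X : Fin r → ℤ, (∀ i, ¬ (c i ≤ ξ i X ∧ ξ i X ≤ c i + 1)) →
        ∀ φ : (Fin r → ℤ) →ₗ[ℤ] ℤ, φ ≠ 0 →
          ∃ a ∈ insert X A, ∃ b ∈ insert X A, φ a + 2 ≤ φ b := by
  by_cases hA : A.Nonempty
  · set S : Set ((Fin r → ℤ) →ₗ[ℤ] ℤ) :=
      {φ | φ ≠ 0 ∧ ∀ a ∈ A, ∀ b ∈ A, φ b ≤ φ a + 1} with hS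
    have hSfin : S.Finite := (bad_finite A hdim).subset (fun φ hφ => hφ.2)
    clear hdim
    haveI := hSfin.fintype
    have e : (↥S × Bool) ≃ Fin (Fintype.card (↥S × Bool)) := Fintype.equivFin _
    let F : ((Fin r → ℤ) →ₗ[ℤ] ℤ) → ℤ := fun ψ => A.inf' hA ⇑ψ
    refine ⟨Fintype.card (↥S × Bool), fun i => ((e.symm i).1.1),
      fun i => F ((e.symm i).1.1) - (cond (e.symm i).2 0 1), ?_, ?_⟩
    · intro i
      exact ((e.symm i).1).2.1
    · intro X hX φ hφ0
      by_cases hφS : φ ∈ S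
      · obtain ⟨a0, ha0, hm⟩ := Finset.exists_mem_eq_inf' hA (⇑φ)
        have h1 := hX (e (⟨φ, hφS⟩, true))
        have h2 := hX (e (⟨φ, hφS⟩, false))
        simp only [Equiv.symm_apply_apply, Bool.cond_true, Bool.cond_false] at h1 h2
        have hm' : F φ = φ a0 := hm
        rw [hm'] at h1 h2
        have hcase : φ X ≤ φ a0 - 2 ∨ φ a0 + 2 ≤ φ X := by omega
        rcases hcase with h | h
        · exact ⟨X, Finset.mem_insert_self _ _, a0, Finset.mem_insert_of_mem ha0, by omega⟩
        · exact ⟨a0, Finset.mem_insert_of_mem ha0, X, Finset.mem_insert_self _ _, by omega⟩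
      · have hex : ∃ a ∈ A, ∃ b ∈ A, φ a + 2 ≤ φ b := by
          by_contra hc
          push_neg at hc
          exact hφS ⟨hφ0, fun a ha b hb => by have := hc a ha b hb; omega⟩
        obtain ⟨a, ha, bb, hb, hab⟩ := hex
        exact ⟨a, Finset.mem_insert_of_mem ha, bb, Finset.mem_insert_of_mem hb, hab⟩
  · refine ⟨0, Fin.elim0, Fin.elim0, fun i => i.elim0, ?_⟩
    intro X _ φ hφ
    exfalso
    apply hφ
    rw [Finset.not_nonempty_iff_eq_empty] at hA
    subst hA
    have hr : r = 0 := by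
      simp only [polyDim, Finset.coe_empty, Set.image_empty] at hdim
      rw [← hdim]
      simp
    clear hdim
    subst hr
    refine LinearMap.ext fun v => ?_
    have hv : v = 0 := by
      funext i
      exact i.elim0
    rw [hv, map_zero]
    rfl


end
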